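/- Let T be a lobster on at least 4 vertices with a perfect matching given by the edge set M, where M is exactly the set of end edges of T, and let P = v₀, v₁, …, v_p be a path in T of maximal length such that every vertex of T is at distance at most 2 from some vertex of P. Then, except for the edges v₀v₁ and v_{p−1}v_p, no edge of P belongs to M. -/
import Mathlib


open SimpleGraph

/-- A graceful labelling of a graph `G` with `m` edges: an injective function
`f` from the vertices into `{0, 1, …, m}` such that the induced edge labels
`|f u − f v|` are pairwise distinct over the edges. -/
def IsGracefulLabeling {V : Type} (G : SimpleGraph V) (f : V → ℕ) : Prop :=
  Function.Injective f ∧ (∀ v, f v ≤ G.edgeSet.ncard) ∧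
  ∀ u v x y : V, G.Adj u v → G.Adj x y →
    Nat.dist (f u) (f v) = Nat.dist (f x) (f y) → s(u, v) = s(x, y)

/-- A strong graceful labelling of `G` on `n` vertices with respect to a matching `M`:
a graceful labelling such that `f x + f y = n - 1` for every edge `xy ∈ M`. -/
def IsStrongGracefulLabeling {V : Type} [Fintype V] (G : SimpleGraph V)
    (M : G.Subgraph) (f : V → ℕ) : Prop :=
  IsGracefulLabeling G f ∧ ∀ x y : V, M.Adj x y → f x + f y = Fintype.card V - 1


/-- An end edge of `G`: an edge incident with a vertex of degree 1. -/
def IsEndEdge {V : Type} (G : SimpleGraph V) (e : Sym2 V) : Prop :=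
  e ∈ G.edgeSet ∧ ∃ x ∈ e, (G.neighborSet x).ncard = 1

/-- `v 0, v 1, …, v p` is a path in `G` (injective on indices `≤ p`, consecutive
vertices adjacent) such that every vertex of `G` is at distance at most `k` from
some vertex of the path, and the path has maximal length among all such paths. -/
def IsMaxDomPath {V : Type} (G : SimpleGraph V) (k p : ℕ) (v : ℕ → V) : Prop :=
  (∀ i ≤ p, ∀ j ≤ p, v i = v j → i = j) ∧
  (∀ i < p, G.Adj (v i) (v (i + 1))) ∧
  (∀ w, ∃ i ≤ p, G.dist w (v i) ≤ k) ∧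
  ∀ (q : ℕ) (u : ℕ → V), (∀ i ≤ q, ∀ j ≤ q, u i = u j → i = j) →
    (∀ i < q, G.Adj (u i) (u (i + 1))) →
    (∀ w, ∃ i ≤ q, G.dist w (u i) ≤ k) → q ≤ p

/-- In a lobster `T` on at least 4 vertices whose set of end edges is a perfect matching
`M`, if `P = v 0, …, v p` is a maximal path such that every vertex is at distance at
most 2 from `P`, then no edge of `P` other than `(v 0)(v 1)` and `(v (p-1))(v p)`
belongs to `M`. -/
theorem lobster_spine_interior_edges {V : Type} [Fintype V] (G : SimpleGraph V)
    (hT : G.IsTree) (hcard : 4 ≤ Fintype.card V)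
    (M : G.Subgraph) (hM : M.IsPerfectMatching)
    (hMend : ∀ e, e ∈ M.edgeSet ↔ IsEndEdge G e)
    (p : ℕ) (v : ℕ → V) (hP : IsMaxDomPath G 2 p v) :
    ∀ i, 1 ≤ i → i + 1 < p → ¬ M.Adj (v i) (v (i + 1)) := by
  obtain ⟨hinj, hadj, -, -⟩ := hP
  intro i h1 h2 hMadj
  have he : s(v i, v (i + 1)) ∈ M.edgeSet := Subgraph.mem_edgeSet.mpr hMadj
  obtain ⟨-, x, hx, hdeg⟩ := (hMend _).mp he
  have two_nbrs : ∀ a b c : V, G.Adj a b → G.Adj c b → a ≠ c →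
      (G.neighborSet b).ncard ≠ 1 := by
    intro a b c hab hcb hac
    have : 1 < (G.neighborSet b).ncard := by
      rw [Set.one_lt_ncard_iff (Set.toFinite _)]
      exact ⟨a, c, hab.symm, hcb.symm, hac⟩
    omega
  rcases Sym2.mem_iff.mp hx with h | h <;> subst h
  · -- x = v i : neighbors v (i-1) and v (i+1)
    have hprev : G.Adj (v (i - 1)) (v i) := by
      have := hadj (i - 1) (by omega)
      rwa [show i - 1 + 1 = i by omega] at this
    have hnext : G.Adj (v (i + 1)) (v i) := (hadj i (by omega)).symm
    have hne : v (i - 1) ≠ v (i + 1) := fun h => by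
      have := hinj (i - 1) (by omega) (i + 1) (by omega) h; omega
    exact two_nbrs _ _ _ hprev hnext hne hdeg
  · -- x = v (i+1) : neighbors v i and v (i+2)
    have h0 : G.Adj (v i) (v (i + 1)) := hadj i (by omega)
    have h1' : G.Adj (v (i + 2)) (v (i + 1)) := (hadj (i + 1) (by omega)).symm
    have hne : v i ≠ v (i + 2) := fun h => by
      have := hinj i (by omega) (i + 2) (by omega) h; omega
    exact two_nbrs _ _ _ h0 h1' hne hdeg
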